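/- Existence of a near-indicator shift function with controlled Laplacian: fix d ∈ ℕ and ε > 0. For every integer L ≥ 1, writing Λ_L = {−L,…,L}^d and Λ_L^− = Λ_{⌈(1−ε/(2d))L⌉}, there exists a function π : ℤ^d → ℝ such that: π_v = 0 for v ∉ Λ_L; |Δπ_v| ≤ C(ε,d)/L² for all v ∈ ℤ^d; π_v ≥ 1 for all v ∈ Λ_L^−; and ‖∇π‖² ≤ C(ε,d) L^{d−2}, where (Δπ)_v = Σ_{u∼v}(π_u − π_v) and ‖∇π‖² = Σ_{u∼v}(π_u − π_v)². -/

import Mathlib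

open Classical
open scoped BigOperators

noncomputable section

abbrev Vert (d : ℕ) := Fin d → ℤ

def LatAdj {d : ℕ} (u v : Vert d) : Prop := (∑ i, (u i - v i).natAbs) = 1

/-- Full-lattice Laplacian `(Δπ)_v = ∑_{u∼v} (π_u − π_v)`. -/
def lapF {d : ℕ} (π : Vert d → ℝ) (v : Vert d) : ℝ :=
  ∑ᶠ u, if LatAdj u v then π u - π v else 0

/-- Full-lattice Dirichlet energy `‖∇π‖² = ∑_{u∼v} (π_u − π_v)²`
(half the sum over ordered adjacent pairs). -/
def gradSqF {d : ℕ} (π : Vert d → ℝ) : ℝ :=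
  (1 / 2) * ∑ᶠ p : Vert d × Vert d,
    if LatAdj p.1 p.2 then (π p.1 - π p.2) ^ 2 else 0

/-- clamped smoothstep -/
def Sf (t : ℝ) : ℝ := if t ≤ 0 then 0 else if 1 ≤ t then 1 else 3*t^2 - 2*t^3

lemma Sf_nonneg (t : ℝ) : 0 ≤ Sf t := by
  unfold Sf; split_ifs with h1 h2 <;> nlinarith
lemma Sf_le_one (t : ℝ) : Sf t ≤ 1 := by
  unfold Sf; split_ifs with h1 h2
  · norm_num
  · norm_num
  · push_neg at h1 h2
    nlinarith [mul_nonneg (mul_nonneg (by linarith : (0:ℝ) ≤ 1 - t) (by linarith : (0:ℝ) ≤ 1 - t)) (by linarith : (0:ℝ) ≤ 1 + 2*t)]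
lemma Sf_of_nonpos {t : ℝ} (h : t ≤ 0) : Sf t = 0 := by simp [Sf, h]
lemma Sf_of_one_le {t : ℝ} (h : 1 ≤ t) : Sf t = 1 := by
  unfold Sf; split_ifs with h1 <;> [linarith; rfl]
lemma Sf_of_mem {t : ℝ} (h0 : 0 < t) (h1 : t < 1) : Sf t = 3*t^2 - 2*t^3 := by
  unfold Sf; split_ifs with a b <;> [linarith; linarith; rfl]

lemma cube_mono {a b : ℝ} (ha : 0 ≤ a) (hb : b ≤ 1) (hab : a ≤ b) :
    3*a^2-2*a^3 ≤ 3*b^2-2*b^3 := by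
  nlinarith [mul_nonneg (sub_nonneg.2 hab) (mul_nonneg ha (sub_nonneg.2 hb)),
    mul_nonneg (sub_nonneg.2 hab) (mul_nonneg ha (sub_nonneg.2 (hab.trans hb))),
    mul_nonneg (sub_nonneg.2 hab) (mul_nonneg (ha.trans hab) (sub_nonneg.2 hb)),
    sq_nonneg (a - b), sq_nonneg (a + b)]

lemma cube_lip {a b : ℝ} (ha : 0 ≤ a) (hb : b ≤ 1) (hab : a ≤ b) :
    3*b^2-2*b^3 - (3*a^2-2*a^3) ≤ 6*(b-a) := by
  nlinarith [mul_nonneg (sub_nonneg.2 hab) (mul_nonneg ha (sub_nonneg.2 hb)),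
    mul_nonneg (sub_nonneg.2 hab) (mul_nonneg ha (sub_nonneg.2 (hab.trans hb))),
    mul_nonneg (sub_nonneg.2 hab) (mul_nonneg (ha.trans hab) (sub_nonneg.2 hb)),
    mul_nonneg (sub_nonneg.2 hab) (sub_nonneg.2 hb),
    mul_nonneg (sub_nonneg.2 hab) (sub_nonneg.2 (hab.trans hb)),
    mul_nonneg (sub_nonneg.2 hab) ha,
    sq_nonneg (a - b)]

lemma Sf_mono {a b : ℝ} (hab : a ≤ b) : Sf a ≤ Sf b := by
  rcases le_or_gt b 0 with hb | hb
  · rw [Sf_of_nonpos hb, Sf_of_nonpos (hab.trans hb)]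
  rcases le_or_gt 1 a with ha | ha
  · rw [Sf_of_one_le ha, Sf_of_one_le (ha.trans hab)]
  rcases le_or_gt a 0 with ha0 | ha0
  · rw [Sf_of_nonpos ha0]; exact Sf_nonneg b
  rcases le_or_gt 1 b with hb1 | hb1
  · rw [Sf_of_one_le hb1]; exact Sf_le_one a
  rw [Sf_of_mem ha0 ha, Sf_of_mem (ha0.trans_le hab) hb1]
  exact cube_mono ha0.le hb1.le hab

lemma Sf_lip {a b : ℝ} (hab : a ≤ b) : Sf b - Sf a ≤ 6 * (b - a) := by
  rcases le_or_gt b 0 with hb | hb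
  · rw [Sf_of_nonpos hb, Sf_of_nonpos (hab.trans hb)]; linarith
  rcases le_or_gt 1 a with ha | ha
  · rw [Sf_of_one_le ha, Sf_of_one_le (ha.trans hab)]; linarith
  rcases le_or_gt a 0 with ha0 | ha0
  · -- a ≤ 0 < b
    rw [Sf_of_nonpos ha0]
    rcases le_or_gt 1 b with hb1 | hb1
    · rw [Sf_of_one_le hb1]; linarith
    · rw [Sf_of_mem hb hb1]; nlinarith
  rcases le_or_gt 1 b with hb1 | hb1
  · -- 0 < a < 1 ≤ b
    rw [Sf_of_one_le hb1, Sf_of_mem ha0 ha]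
    have := cube_lip (a := a) (b := 1) ha0.le le_rfl ha.le
    nlinarith
  · rw [Sf_of_mem ha0 ha, Sf_of_mem (ha0.trans_le hab) hb1]
    exact cube_lip ha0.le hb1.le hab

lemma Sf_lip' (a b : ℝ) : |Sf b - Sf a| ≤ 6 * |b - a| := by
  rcases le_total a b with h | h
  · rw [abs_of_nonneg (sub_nonneg.2 (Sf_mono h)),
      abs_of_nonneg (show (0:ℝ) ≤ b - a by linarith)]
    exact Sf_lip h
  · rw [abs_sub_comm, abs_sub_comm b a, abs_of_nonneg (sub_nonneg.2 (Sf_mono h)),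
      abs_of_nonneg (show (0:ℝ) ≤ a - b by linarith)]
    exact Sf_lip h

lemma Sf_secondDiff {t h : ℝ} (hh : 0 < h) :
    |Sf (t + h) + Sf (t - h) - 2 * Sf t| ≤ 6 * h ^ 2 := by
  have h2 : (0:ℝ) ≤ 6 * h ^ 2 := by positivity
  rcases le_or_gt (t + h) 0 with hv | hv
  · -- all three ≤ 0
    rw [Sf_of_nonpos hv, Sf_of_nonpos (t := t - h) (by linarith),
      Sf_of_nonpos (t := t) (by linarith)]
    norm_num
    positivity
  rcases le_or_gt 1 (t - h) with hu | hu
  · -- all three ≥ 1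
    rw [Sf_of_one_le hu, Sf_of_one_le (t := t + h) (by linarith),
      Sf_of_one_le (t := t) (by linarith)]
    norm_num
    positivity
  -- now t - h < 1, 0 < t + h
  rcases le_or_gt t 0 with ht | ht
  · -- t ≤ 0 : Sf t = Sf (t-h) = 0
    rw [Sf_of_nonpos ht, Sf_of_nonpos (t := t - h) (by linarith)]
    rcases le_or_gt 1 (t + h) with hv1 | hv1
    · -- h ≥ 1
      rw [Sf_of_one_le hv1, abs_le]; constructor <;> nlinarith
    · rw [Sf_of_mem hv hv1, abs_le]
      constructor <;> nlinarith [sq_nonneg (t + h)]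
  rcases le_or_gt 1 t with ht1 | ht1
  · -- t ≥ 1 : Sf t = Sf (t+h) = 1
    rw [Sf_of_one_le ht1, Sf_of_one_le (t := t + h) (by linarith)]
    rcases le_or_gt (t - h) 0 with hu0 | hu0
    · rw [Sf_of_nonpos hu0, abs_le]; constructor <;> nlinarith
    · rw [Sf_of_mem hu0 hu, abs_le]
      constructor <;> nlinarith [sq_nonneg (1 - (t - h)), sq_nonneg (t - h),
        mul_nonneg (mul_nonneg (sub_nonneg.2 hu.le) (sub_nonneg.2 hu.le))
          (by linarith : (0:ℝ) ≤ 1 + 2*(t-h))]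
  -- now 0 < t < 1
  rw [Sf_of_mem ht ht1]
  rcases le_or_gt (t - h) 0 with hu0 | hu0
  · rw [Sf_of_nonpos hu0]
    rcases le_or_gt 1 (t + h) with hv1 | hv1
    · -- t - h ≤ 0 < t < 1 ≤ t + h : so h ≥ max(t, 1-t), h ≥ 1/2
      rw [Sf_of_one_le hv1, abs_le]
      constructor <;> nlinarith [sq_nonneg (1 - t), sq_nonneg t,
        mul_nonneg (mul_nonneg (sub_nonneg.2 ht1.le) (sub_nonneg.2 ht1.le))
          (by linarith : (0:ℝ) ≤ 1 + 2*t)]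
    · rw [Sf_of_mem hv hv1, abs_le]
      constructor <;> nlinarith [sq_nonneg (h - t), sq_nonneg (h + t),
        mul_nonneg (sub_nonneg.2 hu0) (sub_nonneg.2 hv1.le),
        mul_nonneg ht.le (sub_nonneg.2 hv1.le),
        mul_nonneg (mul_nonneg ht.le ht.le) (sub_nonneg.2 hv1.le),
        mul_nonneg (sub_nonneg.2 hu0) ht.le,
        mul_nonneg (mul_nonneg (sub_nonneg.2 hu0) ht.le) hh.le]
  · rw [Sf_of_mem hu0 hu]
    rcases le_or_gt 1 (t + h) with hv1 | hv1
    · -- 0 < t - h, t < 1 ≤ t + h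
      rw [Sf_of_one_le hv1, abs_le]
      constructor <;> nlinarith [sq_nonneg (h - (1 - t)), sq_nonneg (h + (1 - t)),
        mul_nonneg (sub_nonneg.2 hv1) (sub_nonneg.2 ht1.le),
        mul_nonneg (sub_nonneg.2 hv1) (sub_nonneg.2 hu.le),
        mul_nonneg (mul_nonneg (sub_nonneg.2 ht1.le) (sub_nonneg.2 ht1.le)) (sub_nonneg.2 hv1),
        mul_nonneg (mul_nonneg (sub_nonneg.2 hv1) (sub_nonneg.2 ht1.le)) hh.le]
    · -- all mid
      rw [Sf_of_mem hv hv1, abs_le]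
      constructor <;> nlinarith [mul_nonneg (sq_nonneg h) ht.le,
        mul_nonneg (sq_nonneg h) (sub_nonneg.2 ht1.le)]


/-- the displacement: `±1` in coordinate `i`. -/
def updN {d : ℕ} (v : Vert d) (p : Fin d × Bool) : Vert d :=
  Function.update v p.1 (v p.1 + (if p.2 then 1 else -1))

lemma updN_adj {d : ℕ} (v : Vert d) (p : Fin d × Bool) : LatAdj (updN v p) v := by
  unfold LatAdj updN
  rw [Finset.sum_eq_single p.1]
  · rcases p with ⟨i, b⟩
    cases b <;> simp
  · intro j _ hj
    simp [Function.update_of_ne hj]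
  · simp

lemma updN_inj {d : ℕ} (v : Vert d) : Function.Injective (updN v) := by
  rintro ⟨i, b⟩ ⟨j, c⟩ h
  simp only [updN] at h
  by_cases hij : i = j
  · subst hij
    have h1 := congrFun h i
    simp only [Function.update_self] at h1
    cases b <;> cases c <;> simp_all <;> omega
  · exfalso
    have h1 := congrFun h i
    rw [Function.update_self, Function.update_of_ne hij] at h1
    cases b <;> simp at h1 <;> omega

lemma adj_iff {d : ℕ} {u v : Vert d} : LatAdj u v ↔ ∃ p : Fin d × Bool, u = updN v p := by
  constructor
  · intro h
    unfold LatAdj at h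
    have hex : ∃ i : Fin d, (u i - v i).natAbs ≠ 0 := by
      by_contra hc
      push_neg at hc
      simp only [hc] at h
      simp at h
    obtain ⟨i, hi⟩ := hex
    have hsplit : (u i - v i).natAbs
        + ∑ k ∈ Finset.univ.erase i, (u k - v k).natAbs = 1 := by
      rw [Finset.add_sum_erase Finset.univ (fun k => (u k - v k).natAbs)
        (Finset.mem_univ i)]
      exact h
    have hi1 : (u i - v i).natAbs = 1 := by omega
    have hrest : ∀ j, j ≠ i → (u j - v j).natAbs = 0 := by
      intro j hj
      have hz : ∑ k ∈ Finset.univ.erase i, (u k - v k).natAbs = 0 := by omega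
      have := Finset.sum_eq_zero_iff.mp hz j (by simp [hj])
      exact this
    have hcases : u i = v i + 1 ∨ u i = v i + (-1) := by omega
    rcases hcases with hc | hc
    · refine ⟨⟨i, true⟩, funext fun j => ?_⟩
      unfold updN
      by_cases hj : j = i
      · subst hj; rw [Function.update_self]; simpa using hc
      · rw [Function.update_of_ne hj]
        have := hrest j hj; omega
    · refine ⟨⟨i, false⟩, funext fun j => ?_⟩
      unfold updN
      by_cases hj : j = i
      · subst hj; rw [Function.update_self]; simpa using hc
      · rw [Function.update_of_ne hj]
        have := hrest j hj; omega
  · rintro ⟨p, rfl⟩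
    exact updN_adj v p

/-- the finset of neighbours of `v` -/
def nbhd {d : ℕ} (v : Vert d) : Finset (Vert d) := Finset.univ.image (updN v)

lemma mem_nbhd {d : ℕ} {u v : Vert d} : u ∈ nbhd v ↔ LatAdj u v := by
  rw [adj_iff]
  simp [nbhd, eq_comm]

lemma lapF_eq {d : ℕ} (π : Vert d → ℝ) (v : Vert d) :
    lapF π v = ∑ p : Fin d × Bool, (π (updN v p) - π v) := by
  unfold lapF
  rw [finsum_eq_sum_of_support_subset _ (s := nbhd v)]
  · rw [Finset.sum_ite_of_true (fun u hu => mem_nbhd.mp hu), nbhd,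
      Finset.sum_image (fun a _ b _ h => updN_inj v h)]
  · intro u hu
    simp only [Function.mem_support] at hu
    have : LatAdj u v := by
      by_contra hc; simp [hc] at hu
    simpa [mem_nbhd] using this

section Master
variable {d : ℕ} {L : ℕ} {M : ℤ} {g : ℤ → ℝ} {A B : ℝ}

/-- the product function -/
def prodFn (d : ℕ) (g : ℤ → ℝ) : Vert d → ℝ := fun v => ∏ i, g (v i)

lemma prodFn_update (g : ℤ → ℝ) (v : Vert d) (i : Fin d) (c : ℤ) :
    prodFn d g (Function.update v i c) = g c * ∏ j ∈ Finset.univ.erase i, g (v j) := by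
  unfold prodFn
  have h1 : ∀ j ∈ Finset.univ, g (Function.update v i c j)
      = Function.update (fun j => g (v j)) i (g c) j := by
    intro j _
    by_cases hj : j = i
    · subst hj; simp
    · simp [Function.update_of_ne hj]
  rw [Finset.prod_congr rfl h1, Finset.prod_update_of_mem (Finset.mem_univ i),
    Finset.sdiff_singleton_eq_erase]

lemma prodFn_self (g : ℤ → ℝ) (v : Vert d) (i : Fin d) :
    prodFn d g v = g (v i) * ∏ j ∈ Finset.univ.erase i, g (v j) :=
  (Finset.mul_prod_erase Finset.univ _ (Finset.mem_univ i)).symm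

lemma prodFn_nonneg (hg0 : ∀ x, 0 ≤ g x) (v : Vert d) : 0 ≤ prodFn d g v :=
  Finset.prod_nonneg fun i _ => hg0 (v i)

lemma prodFn_le_one (hg0 : ∀ x, 0 ≤ g x) (hg1 : ∀ x, g x ≤ 1) (v : Vert d) :
    prodFn d g v ≤ 1 :=
  Finset.prod_le_one (fun i _ => hg0 (v i)) (fun i _ => hg1 (v i))

lemma erase_prod_mem (hg0 : ∀ x, 0 ≤ g x) (hg1 : ∀ x, g x ≤ 1) (v : Vert d) (i : Fin d) :
    0 ≤ (∏ j ∈ Finset.univ.erase i, g (v j)) ∧ (∏ j ∈ Finset.univ.erase i, g (v j)) ≤ 1 :=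
  ⟨Finset.prod_nonneg fun j _ => hg0 (v j),
   Finset.prod_le_one (fun j _ => hg0 (v j)) (fun j _ => hg1 (v j))⟩

lemma prodFn_zero (hgout : ∀ x : ℤ, (L:ℤ) < |x| → g x = 0) (v : Vert d)
    (hv : ¬ (∀ i, |v i| ≤ (L : ℤ))) : prodFn d g v = 0 := by
  push_neg at hv
  obtain ⟨i, hi⟩ := hv
  exact Finset.prod_eq_zero (Finset.mem_univ i) (hgout _ hi)

lemma prodFn_one (hgin : ∀ x : ℤ, |x| ≤ M → g x = 1) (v : Vert d)
    (hv : ∀ i, |v i| ≤ M) : prodFn d g v = 1 :=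
  Finset.prod_eq_one fun i _ => hgin _ (hv i)

lemma updN_eval (v : Vert d) (p : Fin d × Bool) :
    updN v p = Function.update v p.1 (v p.1 + (if p.2 then 1 else -1)) := rfl

lemma lapF_prodFn_bound (hg0 : ∀ x, 0 ≤ g x) (hg1 : ∀ x, g x ≤ 1)
    (hB : ∀ x : ℤ, |g (x+1) + g (x-1) - 2 * g x| ≤ B) (v : Vert d) :
    |lapF (prodFn d g) v| ≤ d * B := by
  rw [lapF_eq]
  have hexp : ∀ p : Fin d × Bool, prodFn d g (updN v p) - prodFn d g v
      = (g (v p.1 + (if p.2 then 1 else -1)) - g (v p.1)) *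
        ∏ j ∈ Finset.univ.erase p.1, g (v j) := by
    intro p
    rw [updN_eval, prodFn_update, prodFn_self g v p.1]
    ring
  simp only [hexp]
  rw [Fintype.sum_prod_type]
  have hsum : ∀ i : Fin d, ∑ b : Bool,
      (g (v i + (if b then 1 else -1)) - g (v i)) * ∏ j ∈ Finset.univ.erase i, g (v j)
      = (g (v i + 1) + g (v i - 1) - 2 * g (v i)) * ∏ j ∈ Finset.univ.erase i, g (v j) := by
    intro i
    have : v i + (-1 : ℤ) = v i - 1 := by ring
    rw [Fintype.sum_bool, if_pos rfl, if_neg (by simp : ¬ (false = true)), this]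
    ring
  rw [Finset.sum_congr rfl (fun i _ => hsum i)]
  calc |∑ i : Fin d, (g (v i + 1) + g (v i - 1) - 2 * g (v i)) * ∏ j ∈ Finset.univ.erase i, g (v j)|
      ≤ ∑ i : Fin d, |(g (v i + 1) + g (v i - 1) - 2 * g (v i)) * ∏ j ∈ Finset.univ.erase i, g (v j)| :=
        Finset.abs_sum_le_sum_abs _ _
    _ ≤ ∑ _i : Fin d, B := by
        apply Finset.sum_le_sum
        intro i _
        rw [abs_mul]
        have hP := erase_prod_mem hg0 hg1 v i
        have hB' := hB (v i)
        have habs : |∏ j ∈ Finset.univ.erase i, g (v j)| ≤ 1 := by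
          rw [abs_of_nonneg hP.1]; exact hP.2
        calc |g (v i + 1) + g (v i - 1) - 2 * g (v i)| * |∏ j ∈ Finset.univ.erase i, g (v j)|
            ≤ B * 1 := by
              apply mul_le_mul hB' habs (abs_nonneg _) ((abs_nonneg _).trans hB')
          _ = B := mul_one B
    _ = d * B := by simp [mul_comm]

def bigBox (d L : ℕ) : Finset (Vert d) :=
  Fintype.piFinset (fun _ => Finset.Icc (-(L:ℤ)-1) ((L:ℤ)+1))

lemma mem_bigBox {v : Vert d} : v ∈ bigBox d L ↔ ∀ i, |v i| ≤ (L:ℤ)+1 := by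
  simp only [bigBox, Fintype.mem_piFinset, Finset.mem_Icc, abs_le]
  constructor <;> intro h i <;> have := h i <;> omega

lemma card_bigBox : (bigBox d L).card = (2*L+3)^d := by
  rw [bigBox, Fintype.card_piFinset]
  have h : (Finset.Icc (-(L:ℤ)-1) ((L:ℤ)+1)).card = 2*L+3 := by
    rw [Int.card_Icc]; omega
  simp [h]

lemma adj_coord_le {u v : Vert d} (h : LatAdj u v) (i : Fin d) :
    (u i - v i).natAbs ≤ 1 := by
  unfold LatAdj at h
  calc (u i - v i).natAbs ≤ ∑ j, (u j - v j).natAbs :=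
        Finset.single_le_sum (f := fun j => (u j - v j).natAbs)
          (fun j _ => Nat.zero_le _) (Finset.mem_univ i)
    _ = 1 := h

lemma adj_diff_le (hg0 : ∀ x, 0 ≤ g x) (hg1 : ∀ x, g x ≤ 1)
    (hA : ∀ x : ℤ, |g (x+1) - g x| ≤ A) (hA0 : 0 ≤ A)
    {u v : Vert d} (h : LatAdj u v) :
    |prodFn d g u - prodFn d g v| ≤ A := by
  obtain ⟨p, rfl⟩ := adj_iff.mp h
  rw [updN_eval, prodFn_update, prodFn_self g v p.1]
  have hP := erase_prod_mem hg0 hg1 v p.1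
  have hgd : |g (v p.1 + (if p.2 then 1 else -1)) - g (v p.1)| ≤ A := by
    rcases p.2 with _ | _
    · have : v p.1 + (-1 : ℤ) = (v p.1 - 1) := by ring
      simp only [if_neg (by simp : ¬ (false = true)), this]
      have := hA (v p.1 - 1)
      rw [sub_add_cancel] at this
      rw [abs_sub_comm]
      exact this
    · simpa using hA (v p.1)
  calc |g (v p.1 + (if p.2 then 1 else -1)) * ∏ j ∈ Finset.univ.erase p.1, g (v j)
        - g (v p.1) * ∏ j ∈ Finset.univ.erase p.1, g (v j)|
      = |g (v p.1 + (if p.2 then 1 else -1)) - g (v p.1)|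
        * |∏ j ∈ Finset.univ.erase p.1, g (v j)| := by
        rw [← abs_mul]; ring_nf
    _ ≤ A * 1 := by
        apply mul_le_mul hgd _ (abs_nonneg _) hA0
        rw [abs_of_nonneg hP.1]; exact hP.2
    _ = A := mul_one A

lemma gradSq_prodFn_bound (hg0 : ∀ x, 0 ≤ g x) (hg1 : ∀ x, g x ≤ 1)
    (hgout : ∀ x : ℤ, (L:ℤ) < |x| → g x = 0)
    (hA : ∀ x : ℤ, |g (x+1) - g x| ≤ A) (hA0 : 0 ≤ A) :
    gradSqF (prodFn d g) ≤ (((2*L+3)^d * (d*2) : ℕ) : ℝ) * A^2 := by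
  classical
  set π := prodFn d g with hπ
  set T : Finset (Vert d × Vert d) := bigBox d L ×ˢ bigBox d L with hT
  have hne : ∀ w : Vert d, π w ≠ 0 → ∀ i, |w i| ≤ (L:ℤ) := by
    intro w hw
    by_contra hc
    exact hw (prodFn_zero hgout w hc)
  have hsupp : (Function.support fun p : Vert d × Vert d =>
      if LatAdj p.1 p.2 then (π p.1 - π p.2) ^ 2 else 0) ⊆ ↑T := by
    intro p hp
    simp only [Function.mem_support] at hp
    have hadj : LatAdj p.1 p.2 := by
      by_contra hc; simp [hc] at hp
    have hnz : π p.1 - π p.2 ≠ 0 := by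
      intro hc; rw [if_pos hadj, hc] at hp; simp at hp
    have hin : (∀ i, |p.1 i| ≤ (L:ℤ)) ∨ (∀ i, |p.2 i| ≤ (L:ℤ)) := by
      rcases eq_or_ne (π p.1) 0 with h1 | h1
      · right
        apply hne
        intro hc
        rw [hc] at hnz; exact hnz (by rw [h1, sub_zero]) |>.elim
      · exact Or.inl (hne _ h1)
    have hcoord := adj_coord_le hadj
    have hmem : p.1 ∈ bigBox d L ∧ p.2 ∈ bigBox d L := by
      rw [mem_bigBox, mem_bigBox]
      rcases hin with h | h <;>
      · refine ⟨fun i => ?_, fun i => ?_⟩ <;>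
        · have h1 := h i
          have h2 := hcoord i
          rw [abs_le] at h1 ⊢
          omega
    simp only [hT, Finset.coe_product, Set.mem_prod]
    exact ⟨Finset.mem_coe.mpr hmem.1, Finset.mem_coe.mpr hmem.2⟩
  have hfin : gradSqF π = (1/2) * ∑ p ∈ T,
      (if LatAdj p.1 p.2 then (π p.1 - π p.2) ^ 2 else 0) := by
    unfold gradSqF
    rw [finsum_eq_sum_of_support_subset _ hsupp]
  rw [hfin]
  have hterm : ∀ p ∈ T, (if LatAdj p.1 p.2 then (π p.1 - π p.2) ^ 2 else 0)
      ≤ (if LatAdj p.1 p.2 then A^2 else 0) := by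
    intro p _
    split_ifs with h
    · have := adj_diff_le hg0 hg1 hA hA0 h
      calc (π p.1 - π p.2)^2 = |π p.1 - π p.2|^2 := (sq_abs _).symm
        _ ≤ A^2 := by
            apply pow_le_pow_left₀ (abs_nonneg _) this
    · exact le_refl 0
  have hfiltcard : ((T.filter (fun p => LatAdj p.1 p.2)).card : ℝ)
      ≤ (((2*L+3)^d * (d*2) : ℕ) : ℝ) := by
    have hsub : T.filter (fun p => LatAdj p.1 p.2)
        ⊆ (bigBox d L).biUnion (fun w => (nbhd w).image (fun u => (u, w))) := by
      intro p hp
      simp only [Finset.mem_filter, hT, Finset.mem_product] at hp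
      obtain ⟨⟨h1, h2⟩, hadj⟩ := hp
      refine Finset.mem_biUnion.mpr ⟨p.2, h2, ?_⟩
      exact Finset.mem_image.mpr ⟨p.1, mem_nbhd.mpr hadj, by simp⟩
    have h1 : (T.filter (fun p => LatAdj p.1 p.2)).card
        ≤ (bigBox d L).card * (d*2) := by
      calc (T.filter (fun p => LatAdj p.1 p.2)).card
          ≤ ((bigBox d L).biUnion (fun w => (nbhd w).image (fun u => (u, w)))).card :=
            Finset.card_le_card hsub
        _ ≤ ∑ w ∈ bigBox d L, ((nbhd w).image (fun u => (u, w))).card :=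
            Finset.card_biUnion_le
        _ ≤ ∑ _w ∈ bigBox d L, (d*2) := by
            apply Finset.sum_le_sum
            intro w _
            calc ((nbhd w).image (fun u => (u, w))).card
                ≤ (nbhd w).card := Finset.card_image_le
              _ ≤ (Finset.univ : Finset (Fin d × Bool)).card := Finset.card_image_le
              _ = d * 2 := by simp [Finset.card_univ]
        _ = (bigBox d L).card * (d*2) := by rw [Finset.sum_const, smul_eq_mul]
    rw [card_bigBox] at h1
    exact_mod_cast h1
  calc (1/2 : ℝ) * ∑ p ∈ T, (if LatAdj p.1 p.2 then (π p.1 - π p.2) ^ 2 else 0)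
      ≤ (1/2) * ∑ p ∈ T, (if LatAdj p.1 p.2 then A^2 else 0) := by
        apply mul_le_mul_of_nonneg_left (Finset.sum_le_sum hterm) (by norm_num)
    _ = (1/2) * ((T.filter (fun p => LatAdj p.1 p.2)).card * A^2) := by
        rw [← Finset.sum_filter, Finset.sum_const, nsmul_eq_mul]
    _ ≤ (1/2) * ((((2*L+3)^d * (d*2) : ℕ) : ℝ) * A^2) := by
        apply mul_le_mul_of_nonneg_left _ (by norm_num)
        apply mul_le_mul_of_nonneg_right hfiltcard (by positivity)
    _ ≤ (((2*L+3)^d * (d*2) : ℕ) : ℝ) * A^2 := by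
        have : (0:ℝ) ≤ (((2*L+3)^d * (d*2) : ℕ) : ℝ) * A^2 := by positivity
        linarith

lemma master {d L : ℕ} {M : ℤ} {g : ℤ → ℝ} {A B : ℝ}
    (hg0 : ∀ x, 0 ≤ g x) (hg1 : ∀ x, g x ≤ 1)
    (hgout : ∀ x : ℤ, (L:ℤ) < |x| → g x = 0)
    (hgin : ∀ x : ℤ, |x| ≤ M → g x = 1)
    (hB : ∀ x : ℤ, |g (x+1) + g (x-1) - 2 * g x| ≤ B)
    (hA : ∀ x : ℤ, |g (x+1) - g x| ≤ A) (hA0 : 0 ≤ A) :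
    ∃ π : Vert d → ℝ,
      (∀ v : Vert d, ¬ (∀ i, |v i| ≤ (L : ℤ)) → π v = 0) ∧
      (∀ v : Vert d, |lapF π v| ≤ d * B) ∧
      (∀ v : Vert d, (∀ i, |v i| ≤ M) → 1 ≤ π v) ∧
      gradSqF π ≤ (((2*L+3)^d * (d*2) : ℕ) : ℝ) * A^2 :=
  ⟨prodFn d g, fun v hv => prodFn_zero hgout v hv,
   fun v => lapF_prodFn_bound hg0 hg1 hB v,
   fun v hv => (prodFn_one hgin v hv).ge,
   gradSq_prodFn_bound hg0 hg1 hgout hA hA0⟩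
end Master

set_option maxHeartbeats 2000000

/-- existence of a near-indicator shift function with controlled
Laplacian.  For `d ≥ 1` and `ε > 0` there is `C = C(ε,d) > 0` such that for
every `L ≥ 1` there is `π : ℤ^d → ℝ` vanishing off `Λ_L`, with `|Δπ| ≤ C/L²`
everywhere, `π ≥ 1` on `Λ_L^- = Λ_{⌈(1−ε/(2d))L⌉}`, and `‖∇π‖² ≤ C L^{d−2}`. -/
theorem near_indicator_shift (d : ℕ) (hd : 0 < d) (ε : ℝ) (hε : 0 < ε) :
    ∃ C : ℝ, 0 < C ∧ ∀ L : ℕ, 1 ≤ L →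
      ∃ π : Vert d → ℝ,
        (∀ v : Vert d, ¬ (∀ i, |v i| ≤ (L : ℤ)) → π v = 0) ∧
        (∀ v : Vert d, |lapF π v| ≤ C / (L : ℝ) ^ 2) ∧
        (∀ v : Vert d, (∀ i, |v i| ≤ ⌈(1 - ε / (2 * (d : ℝ))) * (L : ℝ)⌉) → 1 ≤ π v) ∧
        gradSqF π ≤ C * (L : ℝ) ^ ((d : ℤ) - 2) := by
  have hd' : (0:ℝ) < d := by exact_mod_cast hd
  set γ : ℝ := min (ε / (2*d)) (1/2) with hγdef
  have hγ0 : 0 < γ := lt_min (by positivity) (by norm_num)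
  have hγhalf : γ ≤ 1/2 := min_le_right _ _
  have hγε : γ ≤ ε / (2*d) := min_le_left _ _
  set L₀ : ℕ := ⌈4/γ⌉₊ with hL₀def
  have hL₀ : (4:ℝ)/γ ≤ L₀ := Nat.le_ceil _
  have hL₀8 : (8:ℝ) ≤ L₀ := by
    have h1 : (8:ℝ) ≤ 4/γ := by
      rw [le_div_iff₀ hγ0]; linarith
    linarith
  set C : ℝ := 24*d/γ^2 + 288*(d:ℝ)*5^d/γ^2 + 2*(d:ℝ)*(L₀:ℝ)^2
      + 2*(d:ℝ)*5^d*(L₀:ℝ)^2 + 1 with hCdef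
  have hC1 : (0:ℝ) ≤ 24*d/γ^2 := by positivity
  have hC2 : (0:ℝ) ≤ 288*(d:ℝ)*5^d/γ^2 := by positivity
  have hC3 : (0:ℝ) ≤ 2*(d:ℝ)*(L₀:ℝ)^2 := by positivity
  have hC4 : (0:ℝ) ≤ 2*(d:ℝ)*5^d*(L₀:ℝ)^2 := by positivity
  have hCpos : 0 < C := by rw [hCdef]; linarith
  refine ⟨C, hCpos, ?_⟩
  intro L hL
  have hL1 : (1:ℝ) ≤ (L:ℝ) := by exact_mod_cast hL
  have hLpos : (0:ℝ) < L := by linarith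
  have hP0 : (0:ℝ) ≤ (L:ℝ) ^ ((d:ℤ) - 2) := zpow_nonneg (by positivity) _
  have hPL : (L:ℝ) ^ ((d:ℤ) - 2) * (L:ℝ)^2 = (L:ℝ)^d := by
    have h1 : (L:ℝ)^((d:ℤ)-2) * (L:ℝ)^(2:ℤ) = (L:ℝ)^((d:ℤ)) := by
      rw [← zpow_add₀ (ne_of_gt hLpos)]; norm_num
    rw [show ((2:ℤ)) = ((2:ℕ):ℤ) from rfl, zpow_natCast, zpow_natCast] at h1
    exact h1
  have hN : (((2*L+3)^d * (d*2) : ℕ) : ℝ) ≤ 2*(d:ℝ)*5^d*(L:ℝ)^d := by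
    push_cast
    have k1 : (2*(L:ℝ)+3)^d ≤ (5*(L:ℝ))^d :=
      pow_le_pow_left₀ (by positivity) (by linarith) d
    calc (2*(L:ℝ)+3)^d * ((d:ℝ)*2) ≤ (5*(L:ℝ))^d * ((d:ℝ)*2) :=
          mul_le_mul_of_nonneg_right k1 (by positivity)
      _ = 2*(d:ℝ)*5^d*(L:ℝ)^d := by rw [mul_pow]; ring
  by_cases hcase : L < L₀
  · -- small L : indicator function
    have hLL₀ : (L:ℝ) ≤ (L₀:ℝ) := by exact_mod_cast hcase.le
    have hLsq : (L:ℝ)^2 ≤ (L₀:ℝ)^2 := pow_le_pow_left₀ (by positivity) hLL₀ 2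
    set g : ℤ → ℝ := fun x => if |x| ≤ (L:ℤ) then (1:ℝ) else 0 with hgdef
    have hg0 : ∀ x, 0 ≤ g x := by
      intro x; simp only [hgdef]; split_ifs <;> norm_num
    have hg1 : ∀ x, g x ≤ 1 := by
      intro x; simp only [hgdef]; split_ifs <;> norm_num
    have hgout : ∀ x : ℤ, (L:ℤ) < |x| → g x = 0 := by
      intro x hx; simp only [hgdef]; rw [if_neg (not_le.mpr hx)]
    have hgin : ∀ x : ℤ, |x| ≤ (L:ℤ) → g x = 1 := by
      intro x hx; simp only [hgdef]; rw [if_pos hx]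
    have hB : ∀ x : ℤ, |g (x+1) + g (x-1) - 2 * g x| ≤ 2 := by
      intro x
      rw [abs_le]
      constructor <;>
        linarith [hg0 (x+1), hg1 (x+1), hg0 (x-1), hg1 (x-1), hg0 x, hg1 x]
    have hA : ∀ x : ℤ, |g (x+1) - g x| ≤ 1 := by
      intro x
      rw [abs_le]
      constructor <;> linarith [hg0 (x+1), hg1 (x+1), hg0 x, hg1 x]
    obtain ⟨π, hπ0, hπlap, hπ1, hπE⟩ :=
      master (d := d) (L := L) (M := (L:ℤ)) hg0 hg1 hgout hgin hB hA (by norm_num)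
    refine ⟨π, hπ0, ?_, ?_, ?_⟩
    · intro v
      refine (hπlap v).trans ?_
      rw [le_div_iff₀ (by positivity)]
      have k2 : 2*(d:ℝ)*(L:ℝ)^2 ≤ 2*(d:ℝ)*(L₀:ℝ)^2 :=
        mul_le_mul_of_nonneg_left hLsq (by positivity)
      rw [hCdef]; nlinarith
    · intro v hv
      have hMε : ⌈(1 - ε / (2 * (d:ℝ))) * (L:ℝ)⌉ ≤ (L:ℤ) := by
        rw [Int.ceil_le]
        push_cast
        have : 0 ≤ ε / (2*(d:ℝ)) * (L:ℝ) := by positivity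
        nlinarith
      exact hπ1 v fun i => (hv i).trans hMε
    · refine hπE.trans ?_
      have s1 : (((2*L+3)^d * (d*2) : ℕ) : ℝ) * 1^2
          ≤ 2*(d:ℝ)*5^d*(L:ℝ)^d := by rw [one_pow, mul_one]; exact hN
      have s2 : 2*(d:ℝ)*5^d*(L:ℝ)^d
          = 2*(d:ℝ)*5^d*(L:ℝ)^2 * ((L:ℝ) ^ ((d:ℤ) - 2)) := by
        rw [← hPL]; ring
      have s3 : 2*(d:ℝ)*5^d*(L:ℝ)^2 * ((L:ℝ) ^ ((d:ℤ) - 2))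
          ≤ 2*(d:ℝ)*5^d*(L₀:ℝ)^2 * ((L:ℝ) ^ ((d:ℤ) - 2)) := by
        apply mul_le_mul_of_nonneg_right _ hP0
        exact mul_le_mul_of_nonneg_left hLsq (by positivity)
      have s4 : 2*(d:ℝ)*5^d*(L₀:ℝ)^2 * ((L:ℝ) ^ ((d:ℤ) - 2))
          ≤ C * ((L:ℝ) ^ ((d:ℤ) - 2)) := by
        apply mul_le_mul_of_nonneg_right _ hP0
        rw [hCdef]; linarith
      linarith
  · -- large L : smoothstep profile
    push_neg at hcase
    have hLL₀ : (L₀:ℝ) ≤ (L:ℝ) := by exact_mod_cast hcase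
    set M : ℤ := ⌈(1-γ) * (L:ℝ)⌉ with hMdef
    set w : ℝ := (L:ℝ) - (M:ℝ) with hwdef
    have hMge : (1-γ) * (L:ℝ) ≤ (M:ℝ) := Int.le_ceil _
    have hMlt : (M:ℝ) < (1-γ) * (L:ℝ) + 1 := Int.ceil_lt_add_one _
    have hγL : 4 ≤ γ * (L:ℝ) := by
      have h1 : 4 ≤ (L₀:ℝ) * γ := (div_le_iff₀ hγ0).mp hL₀
      nlinarith
    have hw1 : γ * (L:ℝ) / 2 ≤ w := by rw [hwdef]; linarith
    have hw0 : (0:ℝ) < w := by linarith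
    have hM1 : (1:ℤ) ≤ M := by
      have h1 : (4:ℝ) ≤ (M:ℝ) := by nlinarith
      exact_mod_cast (by linarith : (1:ℝ) ≤ (M:ℝ))
    have hML : (M:ℝ) ≤ (L:ℝ) - 2 := by linarith
    set g : ℤ → ℝ := fun x => 1 - Sf ((((|x| : ℤ):ℝ) - (M:ℝ)) / w) with hgdef
    have hg0 : ∀ x, 0 ≤ g x := by
      intro x; simp only [hgdef]; linarith [Sf_le_one ((((|x| : ℤ):ℝ) - (M:ℝ)) / w)]
    have hg1 : ∀ x, g x ≤ 1 := by
      intro x; simp only [hgdef]; linarith [Sf_nonneg ((((|x| : ℤ):ℝ) - (M:ℝ)) / w)]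
    have hgout : ∀ x : ℤ, (L:ℤ) < |x| → g x = 0 := by
      intro x hx
      simp only [hgdef]
      have h1 : ((L:ℝ)) + 1 ≤ ((|x| : ℤ):ℝ) := by exact_mod_cast (by omega : (L:ℤ) + 1 ≤ |x|)
      have h2 : (1:ℝ) ≤ (((|x| : ℤ):ℝ) - (M:ℝ)) / w := by
        rw [le_div_iff₀ hw0, one_mul, hwdef]; linarith
      rw [Sf_of_one_le h2]; ring
    have hgin : ∀ x : ℤ, |x| ≤ M → g x = 1 := by
      intro x hx
      simp only [hgdef]
      have h1 : ((|x| : ℤ):ℝ) ≤ (M:ℝ) := by exact_mod_cast hx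
      have h2 : (((|x| : ℤ):ℝ) - (M:ℝ)) / w ≤ 0 :=
        div_nonpos_of_nonpos_of_nonneg (by linarith) hw0.le
      rw [Sf_of_nonpos h2]; ring
    have key : ∀ y : ℤ, 1 ≤ y → |g (y+1) + g (y-1) - 2 * g y| ≤ 6 / w^2 := by
      intro y hy
      have a1 : |y+1| = y+1 := abs_of_nonneg (by omega)
      have a2 : |y-1| = y-1 := abs_of_nonneg (by omega)
      have a3 : |y| = y := abs_of_nonneg (by omega)
      simp only [hgdef, a1, a2, a3]
      have e1 : (((y:ℤ)+1 : ℤ):ℝ) = (y:ℝ) + 1 := by push_cast; ring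
      have e2 : (((y:ℤ)-1 : ℤ):ℝ) = (y:ℝ) - 1 := by push_cast; ring
      rw [e1, e2]
      have t1 : ((y:ℝ) + 1 - (M:ℝ)) / w = ((y:ℝ) - (M:ℝ)) / w + 1/w := by
        field_simp; ring
      have t2 : ((y:ℝ) - 1 - (M:ℝ)) / w = ((y:ℝ) - (M:ℝ)) / w - 1/w := by
        field_simp; ring
      rw [t1, t2]
      have t3 : (1 - Sf (((y:ℝ) - (M:ℝ)) / w + 1/w)) + (1 - Sf (((y:ℝ) - (M:ℝ)) / w - 1/w))
          - 2 * (1 - Sf (((y:ℝ) - (M:ℝ)) / w))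
          = -(Sf (((y:ℝ) - (M:ℝ)) / w + 1/w) + Sf (((y:ℝ) - (M:ℝ)) / w - 1/w)
            - 2 * Sf (((y:ℝ) - (M:ℝ)) / w)) := by ring
      rw [t3, abs_neg]
      have t4 := Sf_secondDiff (t := ((y:ℝ) - (M:ℝ)) / w) (h := 1/w) (by positivity)
      have t5 : 6 * (1/w)^2 = 6 / w^2 := by field_simp
      rw [t5] at t4
      exact t4
    have geven : ∀ z : ℤ, g (-z) = g z := by
      intro z; simp only [hgdef, abs_neg]
    have hB : ∀ x : ℤ, |g (x+1) + g (x-1) - 2 * g x| ≤ 6 / w^2 := by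
      intro x
      rcases lt_trichotomy x 0 with hx | hx | hx
      · set y : ℤ := -x with hy
        rw [show x + 1 = -(y - 1) from by omega, show x - 1 = -(y + 1) from by omega,
          show x = -y from by omega, geven, geven, geven]
        have h4 := key y (by omega)
        have h6 : g (y - 1) + g (y + 1) - 2 * g y
            = g (y + 1) + g (y - 1) - 2 * g y := by ring
        rw [h6]
        exact h4
      · subst hx
        have e0 : g 0 = 1 := hgin 0 (by simp; omega)
        have e1 : g 1 = 1 := hgin 1 (by simpa using hM1)
        have em1 : g (-1) = 1 := hgin (-1) (by simpa using hM1)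
        norm_num [e0, e1, em1]
        positivity
      · exact key x (by omega)
    have hA : ∀ x : ℤ, |g (x+1) - g x| ≤ 6 / w := by
      intro x
      simp only [hgdef]
      have t1 : (1 - Sf ((((|x+1| : ℤ):ℝ) - (M:ℝ)) / w))
          - (1 - Sf ((((|x| : ℤ):ℝ) - (M:ℝ)) / w))
          = -(Sf ((((|x+1| : ℤ):ℝ) - (M:ℝ)) / w) - Sf ((((|x| : ℤ):ℝ) - (M:ℝ)) / w)) := by
        ring
      rw [t1, abs_neg]
      refine (Sf_lip' _ _).trans ?_
      have hz : |(|x+1| - |x| : ℤ)| ≤ 1 := by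
        refine le_trans (abs_abs_sub_abs_le_abs_sub _ _) ?_
        simp
      have hzr : |((|x+1| : ℤ):ℝ) - ((|x| : ℤ):ℝ)| ≤ 1 := by
        have : ((|x+1| : ℤ):ℝ) - ((|x| : ℤ):ℝ) = (((|x+1| - |x| : ℤ)):ℝ) := by push_cast; ring
        rw [this, ← Int.cast_abs]
        exact_mod_cast hz
      have hdd : ((((|x+1| : ℤ):ℝ) - (M:ℝ)) / w) - ((((|x| : ℤ):ℝ) - (M:ℝ)) / w)
          = (((|x+1| : ℤ):ℝ) - ((|x| : ℤ):ℝ)) / w := by field_simp; ring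
      rw [hdd, abs_div, abs_of_pos hw0]
      calc 6 * (|((|x+1| : ℤ):ℝ) - ((|x| : ℤ):ℝ)| / w) ≤ 6 * (1 / w) := by
            apply mul_le_mul_of_nonneg_left _ (by norm_num)
            exact (div_le_div_iff_of_pos_right hw0).mpr hzr
        _ = 6 / w := by ring
    obtain ⟨π, hπ0, hπlap, hπ1, hπE⟩ :=
      master (d := d) (L := L) (M := M) hg0 hg1 hgout hgin hB hA (by positivity)
    have hwsq : (γ*(L:ℝ)/2)^2 ≤ w^2 := pow_le_pow_left₀ (by positivity) hw1 2
    refine ⟨π, hπ0, ?_, ?_, ?_⟩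
    · intro v
      refine (hπlap v).trans ?_
      have e1 : (d:ℝ) * (6/w^2) ≤ (d:ℝ) * (6/((γ*(L:ℝ)/2)^2)) := by
        apply mul_le_mul_of_nonneg_left _ (by positivity)
        apply div_le_div_of_nonneg_left (by norm_num) (by positivity) hwsq
      have e2 : (d:ℝ) * (6/((γ*(L:ℝ)/2)^2)) = (24*(d:ℝ)/γ^2) / (L:ℝ)^2 := by
        field_simp; ring
      have e3 : (24*(d:ℝ)/γ^2) / (L:ℝ)^2 ≤ C / (L:ℝ)^2 := by
        apply div_le_div_of_nonneg_right ?_ (by positivity)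
        rw [hCdef]; linarith
      linarith
    · intro v hv
      have hMε : ⌈(1 - ε / (2 * (d:ℝ))) * (L:ℝ)⌉ ≤ M := by
        rw [hMdef]
        apply Int.ceil_le_ceil
        nlinarith
      exact hπ1 v fun i => (hv i).trans hMε
    · refine hπE.trans ?_
      have q1 : (6/w)^2 ≤ (6/(γ*(L:ℝ)/2))^2 := by
        apply pow_le_pow_left₀ (by positivity)
        apply div_le_div_of_nonneg_left (by norm_num) (by positivity) hw1
      have q2 : (6/(γ*(L:ℝ)/2))^2 = 144/(γ^2*(L:ℝ)^2) := by
        field_simp; ring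
      have t2 : (((2*L+3)^d * (d*2) : ℕ) : ℝ) * (6/w)^2
          ≤ (2*(d:ℝ)*5^d*(L:ℝ)^d) * (144/(γ^2*(L:ℝ)^2)) := by
        apply mul_le_mul hN (q1.trans_eq q2) (by positivity) (by positivity)
      have t3 : (2*(d:ℝ)*5^d*(L:ℝ)^d) * (144/(γ^2*(L:ℝ)^2))
          = (288*(d:ℝ)*5^d/γ^2) * ((L:ℝ) ^ ((d:ℤ) - 2)) := by
        rw [← hPL]; field_simp; ring
      have t4 : (288*(d:ℝ)*5^d/γ^2) * ((L:ℝ) ^ ((d:ℤ) - 2))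
          ≤ C * ((L:ℝ) ^ ((d:ℤ) - 2)) := by
        apply mul_le_mul_of_nonneg_right _ hP0
        rw [hCdef]; linarith
      linarith
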